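/- Let n, m be integers with 5 ≤ m and m ≤ (2/3)n, and let t : ℕ → ℕ satisfy t_k = 0 unless 2 ≤ k ≤ m. Assume n(n-1) = Σ_{k=2}^{m} k(k-1) t_k and t₂ + (3/4)t₃ + Σ_{k=5}^{m}(k - k²/4) t_k ≥ n. Then Σ_{k=2}^{m} (k-1) t_k ≥ (m+2)n(n-1)/(6m) + 2(m-1)n/(3m). -/

import Mathlib

lemma aux9 (m k τ : ℝ) (hm : 5 ≤ m) (hk2 : 2 ≤ k) (hkm : k ≤ m) (ht : 0 ≤ τ) :
    (m + 2) / (6 * m) * (k * (k - 1) * τ) + 2 * (m - 1) / (3 * m) * ((k - k ^ 2 / 4) * τ)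
      ≤ (k - 1) * τ := by
  have hm0 : (0:ℝ) < m := by linarith
  rw [← sub_nonneg]
  have h : (k - 1) * τ - ((m + 2) / (6 * m) * (k * (k - 1) * τ)
      + 2 * (m - 1) / (3 * m) * ((k - k ^ 2 / 4) * τ))
      = ((k - 2) * (m - k) * τ) / (2 * m) := by
    field_simp
    ring
  rw [h]
  have : 0 ≤ (k - 2) * (m - k) * τ :=
    mul_nonneg (mul_nonneg (by linarith) (by linarith)) ht
  positivity

theorem stmt9 (n m : ℕ) (hm : 5 ≤ m) (hmn : (m : ℝ) ≤ 2 / 3 * n)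
    (t : ℕ → ℕ) (ht0 : ∀ k, ¬(2 ≤ k ∧ k ≤ m) → t k = 0)
    (hpairs : (n : ℝ) * (n - 1) = ∑ k ∈ Finset.Icc 2 m, (k : ℝ) * (k - 1) * t k)
    (hboj : (n : ℝ) ≤ t 2 + (3 / 4) * t 3
      + ∑ k ∈ Finset.Icc 5 m, ((k : ℝ) - (k : ℝ) ^ 2 / 4) * t k) :
    ((m : ℝ) + 2) * n * (n - 1) / (6 * m) + 2 * ((m : ℝ) - 1) * n / (3 * m)
      ≤ ∑ k ∈ Finset.Icc 2 m, ((k : ℝ) - 1) * t k := by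
  have hmR : (5:ℝ) ≤ m := by exact_mod_cast hm
  have hm0 : (0:ℝ) < m := by linarith
  -- split sums
  have hsplit : ∀ F : ℕ → ℝ, ∑ k ∈ Finset.Icc 2 m, F k
      = F 2 + F 3 + F 4 + ∑ k ∈ Finset.Icc 5 m, F k := by
    intro F
    have h1 : Finset.Icc 2 m = insert 2 (insert 3 (insert 4 (Finset.Icc 5 m))) := by
      ext x; simp only [Finset.mem_Icc, Finset.mem_insert]; omega
    rw [h1, Finset.sum_insert (by simp only [Finset.mem_insert, Finset.mem_Icc]; omega),
      Finset.sum_insert (by simp only [Finset.mem_insert, Finset.mem_Icc]; omega),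
      Finset.sum_insert (by simp only [Finset.mem_Icc]; omega)]
    ring
  rw [hsplit] at hpairs
  rw [hsplit]
  -- abbreviations
  set A := ∑ k ∈ Finset.Icc 5 m, (k : ℝ) * (k - 1) * t k with hA
  set C := ∑ k ∈ Finset.Icc 5 m, ((k : ℝ) - (k : ℝ) ^ 2 / 4) * t k with hC
  set S := ∑ k ∈ Finset.Icc 5 m, ((k : ℝ) - 1) * t k with hS
  have hc2 : (0:ℝ) ≤ 2 * ((m : ℝ) - 1) / (3 * m) := div_nonneg (by linarith) (by linarith)
  have hkey : (m + 2) / (6 * m) * A + 2 * ((m:ℝ) - 1) / (3 * m) * C ≤ S := by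
    rw [hA, hC, hS, Finset.mul_sum, Finset.mul_sum, ← Finset.sum_add_distrib]
    apply Finset.sum_le_sum
    intro k hk
    simp only [Finset.mem_Icc] at hk
    exact aux9 m k (t k) hmR (by exact_mod_cast by omega : (2:ℝ) ≤ k)
      (by exact_mod_cast hk.2) (Nat.cast_nonneg _)
  have hb : 2 * ((m:ℝ) - 1) / (3 * m) * n
      ≤ 2 * ((m:ℝ) - 1) / (3 * m) * (t 2 + (3 / 4) * t 3 + C) :=
    mul_le_mul_of_nonneg_left hboj hc2
  have ht2 : (0:ℝ) ≤ (t 2 : ℝ) := by positivity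
  have ht3 : (0:ℝ) ≤ (t 3 : ℝ) := by positivity
  have ht4 : (0:ℝ) ≤ (t 4 : ℝ) := by positivity
  have heq : ((m : ℝ) + 2) * n * (n - 1) / (6 * m)
      = (m + 2) / (6 * m) * ((2:ℝ) * (2 - 1) * t 2 + (3:ℝ) * (3 - 1) * t 3
        + (4:ℝ) * (4 - 1) * t 4 + A) := by
    rw [div_mul_eq_mul_div, mul_assoc, hpairs]
    push_cast
    ring
  rw [heq]
  push_cast
  -- now combine everything
  have h3 : (m + 2) / (6 * m) * ((3:ℝ) * (3 - 1) * t 3)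
      + 2 * ((m:ℝ) - 1) / (3 * m) * ((3 / 4) * t 3) ≤ ((3:ℝ) - 1) * t 3 := by
    rw [← sub_nonneg]
    have h : ((3:ℝ) - 1) * t 3 - ((m + 2) / (6 * m) * ((3:ℝ) * (3 - 1) * t 3)
        + 2 * ((m:ℝ) - 1) / (3 * m) * ((3 / 4) * t 3)) = (m - 3) * t 3 / (2 * m) := by
      field_simp; ring
    rw [h]
    have : (0:ℝ) ≤ (m - 3) * t 3 := mul_nonneg (by linarith) ht3
    positivity
  have h4 : (m + 2) / (6 * m) * ((4:ℝ) * (4 - 1) * t 4) ≤ ((4:ℝ) - 1) * t 4 := by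
    rw [← sub_nonneg]
    have h : ((4:ℝ) - 1) * t 4 - (m + 2) / (6 * m) * ((4:ℝ) * (4 - 1) * t 4)
        = (m - 4) * t 4 / m := by field_simp; ring
    rw [h]
    have : (0:ℝ) ≤ (m - 4) * t 4 := mul_nonneg (by linarith) ht4
    positivity
  have h2 : (m + 2) / (6 * m) * ((2:ℝ) * (2 - 1) * t 2)
      + 2 * ((m:ℝ) - 1) / (3 * m) * (t 2 : ℝ) = ((2:ℝ) - 1) * t 2 := by
    field_simp; ring
  have e1 : 2 * ((m:ℝ) - 1) * n / (3 * m) = 2 * ((m:ℝ) - 1) / (3 * m) * n := by ring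
  have e2 : 2 * ((m:ℝ) - 1) / (3 * m) * ((t 2 : ℝ) + 3 / 4 * t 3 + C)
      = 2 * ((m:ℝ) - 1) / (3 * m) * (t 2 : ℝ)
        + 2 * ((m:ℝ) - 1) / (3 * m) * ((3 / 4) * t 3)
        + 2 * ((m:ℝ) - 1) / (3 * m) * C := by ring
  have e3 : ((m:ℝ) + 2) / (6 * m) * ((2:ℝ) * (2 - 1) * t 2 + 3 * (3 - 1) * t 3
        + 4 * (4 - 1) * t 4 + A)
      = (m + 2) / (6 * m) * ((2:ℝ) * (2 - 1) * t 2)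
        + (m + 2) / (6 * m) * ((3:ℝ) * (3 - 1) * t 3)
        + (m + 2) / (6 * m) * ((4:ℝ) * (4 - 1) * t 4)
        + (m + 2) / (6 * m) * A := by ring
  linarith [hkey, hb, h2, h3, h4, e1, e2, e3]
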